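/- Let 1 <= m < n be integers and let F be a bounded subset of R^n with upper box dim F <= m and max{m, upper box dim F} <= Assouad dim F < m(mn + 2(upper box dim F)(n-m))/(mn + (upper box dim F)(n-m)). Then for almost all V in G(n,m): upper box dim (pi_V F) >= upper box dim F - (Assouad dim F - m)(upper box dim F)/m, and this lower bound is strictly greater than (upper box dim F)/(1 + (1/m - 1/n)(upper box dim F)). -/

import Mathlib

open Filter MeasureTheory Metric Set

noncomputable section
open scoped Classical

variable {E : Type*}

/-- Minimal number of sets of diameter at most `r` needed to cover `F`. -/
def coverNum [PseudoMetricSpace E] (r : ℝ) (F : Set E) : ℕ :=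
  sInf {k : ℕ | ∃ I : Finset (Set E), I.card = k ∧ (∀ U ∈ I, Metric.diam U ≤ r) ∧
    F ⊆ ⋃ U ∈ I, U}

/-- Maximal cardinality of an `r`-separated subset of `F`. -/
def sepNum [PseudoMetricSpace E] (r : ℝ) (F : Set E) : ℕ :=
  sSup {k : ℕ | ∃ T : Finset E, T.card = k ∧ ↑T ⊆ F ∧
    ∀ x ∈ T, ∀ y ∈ T, x ≠ y → r ≤ dist x y}

/-- Upper box-counting dimension. -/
def ubDim [PseudoMetricSpace E] (F : Set E) : ℝ :=
  limsup (fun r : ℝ => Real.log (coverNum r F) / -Real.log r) (nhdsWithin 0 (Set.Ioi 0))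

/-- Lower box-counting dimension. -/
def lbDim [PseudoMetricSpace E] (F : Set E) : ℝ :=
  liminf (fun r : ℝ => Real.log (coverNum r F) / -Real.log r) (nhdsWithin 0 (Set.Ioi 0))

/-- Packing dimension, via countable covers by compact sets. -/
def packDim [PseudoMetricSpace E] (F : Set E) : ℝ :=
  sInf {d : ℝ | ∃ K : ℕ → Set E, (∀ j, IsCompact (K j)) ∧ F ⊆ ⋃ j, K j ∧
    ∀ j, ubDim (K j) ≤ d}

/-- Assouad dimension. -/
def assouadDim [PseudoMetricSpace E] (F : Set E) : ℝ :=
  sInf {α : ℝ | ∃ C : ℝ, 0 < C ∧ ∀ x ∈ F, ∀ r R : ℝ, 0 < r → r < R →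
    (coverNum r (Metric.ball x R ∩ F) : ℝ) ≤ C * (R / r) ^ α}

/-- Upper Assouad spectrum at `θ`. -/
def upperAssouadSpectrum [PseudoMetricSpace E] (θ : ℝ) (F : Set E) : ℝ :=
  sInf {α : ℝ | ∃ C : ℝ, 0 < C ∧ ∀ x ∈ F, ∀ r R : ℝ, 0 < r → 0 < R →
    r ≤ R ^ (1/θ) → R ^ (1/θ) < R → R < 1 →
    (coverNum r (Metric.ball x R ∩ F) : ℝ) ≤ C * (R / r) ^ α}

/-- Assouad spectrum at `θ` (with `r = R^{1/θ}`). -/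
def assouadSpectrum [PseudoMetricSpace E] (θ : ℝ) (F : Set E) : ℝ :=
  sInf {α : ℝ | ∃ C : ℝ, 0 < C ∧ ∀ x ∈ F, ∀ R : ℝ, 0 < R → R ^ (1/θ) < R → R < 1 →
    (coverNum (R ^ (1/θ)) (Metric.ball x R ∩ F) : ℝ) ≤ C * (R / R ^ (1/θ)) ^ α}

/-- Quasi-Assouad dimension: limit of the upper Assouad spectrum as `θ ↗ 1`. -/
def qaDim [PseudoMetricSpace E] (F : Set E) : ℝ :=
  limsup (fun θ : ℝ => upperAssouadSpectrum θ F) (nhdsWithin 1 (Set.Iio 1))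

/-- The kernel `φ_r^s(x) = min{1, (r/|x|)^s}` (equal to `1` at `x = 0`). -/
def riesz [NormedAddCommGroup E] (s r : ℝ) (x : E) : ℝ :=
  if x = 0 then 1 else min 1 ((r / ‖x‖) ^ s)

/-- The energy of a measure with respect to the kernel `φ_r^s`. -/
def energy [NormedAddCommGroup E] [MeasurableSpace E] (s r : ℝ) (μ : Measure E) : ℝ :=
  ∫ x, ∫ y, riesz s r (x - y) ∂μ ∂μ

/-- The capacity `C_r^s(F)`: reciprocal of the infimal energy over Borel probability
measures supported on the closure of `F`. -/
def capacity [NormedAddCommGroup E] [MeasurableSpace E] (s r : ℝ) (F : Set E) : ℝ :=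
  (sInf {e : ℝ | ∃ μ : Measure E, IsProbabilityMeasure μ ∧ μ (closure F) = 1 ∧
    e = energy s r μ})⁻¹

/-- Upper box dimension profile at exponent `s`. -/
def ubDimProfile [NormedAddCommGroup E] [MeasurableSpace E] (s : ℝ) (F : Set E) : ℝ :=
  limsup (fun r : ℝ => Real.log (capacity s r F) / -Real.log r) (nhdsWithin 0 (Set.Ioi 0))

/-- Lower box dimension profile at exponent `s`. -/
def lbDimProfile [NormedAddCommGroup E] [MeasurableSpace E] (s : ℝ) (F : Set E) : ℝ :=
  liminf (fun r : ℝ => Real.log (capacity s r F) / -Real.log r) (nhdsWithin 0 (Set.Ioi 0))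

/-- Packing dimension profile at exponent `s`. -/
def packDimProfile [NormedAddCommGroup E] [MeasurableSpace E] (s : ℝ) (F : Set E) : ℝ :=
  sInf {d : ℝ | ∃ K : ℕ → Set E, (∀ j, IsCompact (K j)) ∧ F ⊆ ⋃ j, K j ∧
    ∀ j, ubDimProfile s (K j) ≤ d}

/-- The Grassmannian of `m`-dimensional subspaces of `ℝⁿ`. -/
def Grass (n m : ℕ) : Type :=
  {V : Submodule ℝ (EuclideanSpace ℝ (Fin n)) // Module.finrank ℝ V = m}

instance (n m : ℕ) : MeasurableSpace (Grass n m) := ⊤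

/-- Action of the orthogonal group on the Grassmannian. -/
def grassAction {n m : ℕ}
    (g : EuclideanSpace ℝ (Fin n) ≃ₗᵢ[ℝ] EuclideanSpace ℝ (Fin n)) (V : Grass n m) :
    Grass n m :=
  ⟨(V.1).map (g.toLinearEquiv : EuclideanSpace ℝ (Fin n) →ₗ[ℝ] EuclideanSpace ℝ (Fin n)),
    by rw [LinearEquiv.finrank_map_eq]; exact V.2⟩

/-- Image of `F` under orthogonal projection onto the subspace `V`. -/
def projImg {n : ℕ} (V : Submodule ℝ (EuclideanSpace ℝ (Fin n)))
    (F : Set (EuclideanSpace ℝ (Fin n))) : Set (EuclideanSpace ℝ (Fin n)) :=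
  (fun x => (V.orthogonalProjection x : EuclideanSpace ℝ (Fin n))) '' F

/-- The set of reals `∑_{k≥1} a_k 2^{-k}` with binary digits `a_k ∈ {0,1}` vanishing
outside `S`. -/
def XS (S : Set ℕ) : Set ℝ :=
  {x | ∃ a : ℕ → ℝ, (∀ k, a k = 0 ∨ a k = 1) ∧ (∀ k, k ∉ S → a k = 0) ∧
    x = ∑' k : ℕ, a (k + 1) * (2 : ℝ) ^ (-(k + 1 : ℤ))}

/-- The `n`-fold product `X_S^n ⊆ [0,1]^n`. -/
def XSn (n : ℕ) (S : Set ℕ) : Set (EuclideanSpace ℝ (Fin n)) :=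
  {x | ∀ i, x i ∈ XS S}

/-- Upper density of a set of naturals. -/
def upperDensity (S : Set ℕ) : ℝ :=
  limsup (fun k : ℕ => ((S ∩ Set.Icc 1 k).ncard : ℝ) / k) atTop

/-- Upper Banach density of a set of naturals. -/
def upperBanachDensity (S : Set ℕ) : ℝ :=
  limsup (fun k : ℕ => ⨆ l : ℕ, ((S ∩ Set.Ico l (l + k)).ncard : ℝ) / k) atTop

/-- `F` can be covered by at most `N` axis-parallel cubes of side `δ`. -/
def CoveredByCubes {n : ℕ} (F : Set (EuclideanSpace ℝ (Fin n))) (N δ : ℝ) : Prop :=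
  ∃ I : Finset (EuclideanSpace ℝ (Fin n)), (I.card : ℝ) ≤ N ∧
    F ⊆ ⋃ c ∈ I, {x | ∀ i, x i ∈ Set.Icc (c i) (c i + δ)}

end

lemma ubDim_nonneg' {E : Type*} [PseudoMetricSpace E] (F : Set E) : 0 ≤ ubDim F := by
  rw [ubDim, Filter.limsup_eq]
  apply Real.sInf_nonneg
  intro a ha
  simp only [Set.mem_setOf_eq] at ha
  have h01 : Set.Ioo (0:ℝ) 1 ∈ nhdsWithin 0 (Set.Ioi 0) :=
    Ioo_mem_nhdsGT_of_mem (by constructor <;> norm_num)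
  have hnn : ∀ᶠ r in nhdsWithin (0:ℝ) (Set.Ioi 0),
      0 ≤ Real.log (coverNum r F) / -Real.log r := by
    filter_upwards [h01] with r hr
    have hlr : Real.log r < 0 := Real.log_neg hr.1 hr.2
    apply div_nonneg _ (by linarith)
    rcases Nat.eq_zero_or_pos (coverNum r F) with h | h
    · simp [h]
    · exact Real.log_nonneg (by exact_mod_cast h)
  obtain ⟨r, hr1, hr2⟩ := (hnn.and ha).exists
  linarith

/-- improved almost-sure projection bound under an Assouad dimension
restriction.  (The Assouad spectrum bound and the almost-sure projection estimate
are taken as given.) -/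
theorem stmt_17 {n m : ℕ} (hm : 1 ≤ m) (hmn : m < n)
    (F : Set (EuclideanSpace ℝ (Fin n))) (hb : Bornology.IsBounded F)
    (hub : ubDim F ≤ (m : ℝ))
    (h1 : max (m : ℝ) (ubDim F) ≤ assouadDim F)
    (h2 : assouadDim F <
      (m : ℝ) * ((m : ℝ) * n + 2 * ubDim F * ((n : ℝ) - m)) /
        ((m : ℝ) * n + ubDim F * ((n : ℝ) - m)))
    (μ : Measure (Grass n m)) [IsProbabilityMeasure μ]
    (hinv : ∀ g : EuclideanSpace ℝ (Fin n) ≃ₗᵢ[ℝ] EuclideanSpace ℝ (Fin n),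
      Measure.map (grassAction g) μ = μ)
    (hspec : ∀ θ : ℝ, θ ∈ Set.Ioo (0:ℝ) 1 →
      upperAssouadSpectrum θ F ≤ ubDim F / (1 - θ))
    (hproj : ∀ θ : ℝ, θ ∈ Set.Ioo (0:ℝ) 1 → ∀ᵐ V ∂μ,
      ubDim F - max 0 (max (upperAssouadSpectrum θ F - m)
        ((assouadDim F - m) * (1 - θ))) ≤ ubDim (projImg V.1 F)) :
    (∀ᵐ V ∂μ,
      ubDim F - (assouadDim F - m) * ubDim F / m ≤ ubDim (projImg V.1 F)) ∧
      ubDim F / (1 + (1 / (m : ℝ) - 1 / (n : ℝ)) * ubDim F) <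
        ubDim F - (assouadDim F - m) * ubDim F / m := by
  set B := ubDim F with hBdef
  set A := assouadDim F with hAdef
  have hB0 : 0 ≤ B := ubDim_nonneg' F
  have hmA : (m : ℝ) ≤ A := le_trans (le_max_left _ _) h1
  have hBA : B ≤ A := le_trans (le_max_right _ _) h1
  have hm0 : (0 : ℝ) < m := by exact_mod_cast hm
  have hn0 : (0 : ℝ) < n := by exact_mod_cast (lt_of_le_of_lt (Nat.zero_le m) hmn)
  have hmn' : (m : ℝ) < n := by exact_mod_cast hmn
  have hD0 : (0 : ℝ) < (m : ℝ) * n + B * ((n : ℝ) - m) := by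
    have : 0 ≤ B * ((n : ℝ) - m) := mul_nonneg hB0 (by linarith)
    nlinarith
  have h2' : A * ((m : ℝ) * n + B * ((n : ℝ) - m)) <
      (m : ℝ) * ((m : ℝ) * n + 2 * B * ((n : ℝ) - m)) := by
    rw [lt_div_iff₀ hD0] at h2
    exact h2
  have hBpos : 0 < B := by
    rcases lt_or_eq_of_le hB0 with h | h
    · exact h
    · exfalso; rw [← h] at h2'
      nlinarith [mul_le_mul_of_nonneg_right hmA (le_of_lt (mul_pos hm0 hn0))]
  have key : (A - m) * ((m : ℝ) * n) < (2 * (m : ℝ) - A) * B * ((n : ℝ) - m) := by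
    nlinarith
  have hAm : 0 ≤ A - (m : ℝ) := by linarith
  have hs0 : 0 ≤ (A - m) * B / m :=
    div_nonneg (mul_nonneg hAm hB0) hm0.le
  constructor
  · -- the almost sure bound
    have claim : ∀ ε : ℝ, 0 < ε → ∀ᵐ V ∂μ,
        B - ((A - m) * B / m + ε) ≤ ubDim (projImg V.1 F) := by
      intro ε hε
      obtain ⟨c, hcdef⟩ : ∃ c : ℝ, c = (m : ℝ) + (A - m) * B / m + ε := ⟨_, rfl⟩
      have hc0 : 0 < c := by rw [hcdef]; linarith
      obtain ⟨t, htdef⟩ : ∃ t : ℝ, t = B / c := ⟨_, rfl⟩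
      have ht0 : 0 < t := htdef ▸ div_pos hBpos hc0
      have ht1 : t < 1 := by
        rw [htdef, div_lt_one hc0, hcdef]
        linarith [hub]
      obtain ⟨θ, hθdef⟩ : ∃ θ : ℝ, θ = 1 - t := ⟨_, rfl⟩
      have hθmem : θ ∈ Set.Ioo (0 : ℝ) 1 := ⟨by rw [hθdef]; linarith, by
        rw [hθdef]; linarith⟩
      have h1θ : 1 - θ = t := by rw [hθdef]; ring
      have hspecθ : upperAssouadSpectrum θ F ≤ c := by
        have hsp := hspec θ hθmem
        rw [h1θ, htdef] at hsp
        calc upperAssouadSpectrum θ F ≤ B / (B / c) := hsp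
          _ = c := by
              rw [div_div_eq_mul_div, mul_comm, mul_div_assoc, div_self (ne_of_gt hBpos),
                mul_one]
      have hmax : max 0 (max (upperAssouadSpectrum θ F - m) ((A - m) * (1 - θ)))
          ≤ (A - m) * B / m + ε := by
        apply max_le (by linarith)
        apply max_le
        · rw [hcdef] at hspecθ; linarith
        · rw [h1θ]
          have htB : t ≤ B / m := by
            rw [htdef]
            apply div_le_div_of_nonneg_left hB0 hm0
            rw [hcdef]; linarith
          have h5 : (A - m) * t ≤ (A - m) * (B / m) :=
            mul_le_mul_of_nonneg_left htB hAm
          calc (A - m) * t ≤ (A - m) * (B / m) := h5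
            _ = (A - m) * B / m := by ring
            _ ≤ (A - m) * B / m + ε := by linarith
      filter_upwards [hproj θ hθmem] with V hV
      calc B - ((A - m) * B / m + ε)
          ≤ B - max 0 (max (upperAssouadSpectrum θ F - m) ((A - m) * (1 - θ))) := by
            linarith
        _ ≤ ubDim (projImg V.1 F) := hV
    have hae : ∀ᵐ V ∂μ, ∀ k : ℕ,
        B - ((A - m) * B / m + 1 / (k + 1)) ≤ ubDim (projImg V.1 F) :=
      ae_all_iff.mpr (fun k => claim (1 / (k + 1)) (by positivity))
    filter_upwards [hae] with V hV
    by_contra hcon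
    push_neg at hcon
    obtain ⟨k, hk⟩ := exists_nat_one_div_lt (show 0 < B - (A - m) * B / m -
      ubDim (projImg V.1 F) by linarith)
    have := hV k
    push_cast at hk this
    linarith
  · -- the strict inequality
    have hden : (1 : ℝ) + (1 / m - 1 / n) * B = ((m : ℝ) * n + B * ((n : ℝ) - m)) /
        ((m : ℝ) * n) := by
      field_simp
    have hRHS : B - (A - m) * B / m = (2 * (m : ℝ) - A) * B / m := by
      field_simp
      ring
    rw [hden, hRHS, div_div_eq_mul_div, div_lt_div_iff₀ hD0 hm0]
    nlinarith [mul_pos hBpos (sub_pos.mpr key)]
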